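/- Suppose α₁ ≥ α₂ and α₁α₂ > β₁β₂. Set k = (α₁ + rβ₂)/ρ̃ and l = −((α₁α₂ + 2α₂β₂ + β₁β₂)r + α₁α₂ + 2α₁β₁ + β₁β₂)/ρ̃. Then k > 0, l < 0, and for all real x, y: R(x,y) = (λ₁ + λ₂) + k·S(x,y) + l·T(x,y). -/

import Mathlib

/-- Decomposition of `R` in terms of `S` and `T`. Suppose `α₁ ≥ α₂`
and `α₁α₂ > β₁β₂`; set `ρ̃ = α₁α₂ − β₁β₂`, `k = (α₁ + rβ₂)/ρ̃` and
`l = −((α₁α₂ + 2α₂β₂ + β₁β₂)r + α₁α₂ + 2α₁β₁ + β₁β₂)/ρ̃`, where `r` is the positive root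
of `β₂r² + (α₁−α₂)r − β₁ = 0`. Then `k > 0`, `l < 0` and
`R(x,y) = (λ₁ + λ₂) + k·S(x,y) + l·T(x,y)` for all real `x, y`. -/
theorem stmt_12
    (l₁ l₂ β₁ β₂ α₁ α₂ : ℝ)
    (hl₁ : 0 < l₁) (hl₂ : 0 < l₂) (hβ₁ : 0 < β₁) (hβ₂ : 0 < β₂)
    (hα₁ : 0 ≤ α₁) (hα₂ : 0 ≤ α₂)
    (ha12 : α₂ ≤ α₁) (hab : β₁ * β₂ < α₁ * α₂)
    (r : ℝ) (hr : r = (-(α₁ - α₂) + Real.sqrt ((α₁ - α₂) ^ 2 + 4 * β₁ * β₂)) / (2 * β₂))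
    (R : ℝ → ℝ → ℝ) (hR : ∀ x y, R x y = (α₁ + β₂) * x + (α₂ + β₁) * y + l₁ + l₂)
    (S : ℝ → ℝ → ℝ) (hS : ∀ x y, S x y = (α₁ * α₂ + β₁ * β₂ + 2 * α₂ * β₂) * x +
      (α₁ * α₂ + β₁ * β₂ + 2 * α₁ * β₁) * y)
    (T : ℝ → ℝ → ℝ) (hT : ∀ x y, T x y = β₂ * x + (r * β₂ + α₁ - α₂) * y)
    (k l : ℝ)
    (hk : k = (α₁ + r * β₂) / (α₁ * α₂ - β₁ * β₂))
    (hl : l = -((α₁ * α₂ + 2 * α₂ * β₂ + β₁ * β₂) * r + α₁ * α₂ + 2 * α₁ * β₁ + β₁ * β₂) /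
      (α₁ * α₂ - β₁ * β₂)) :
    0 < k ∧ l < 0 ∧ ∀ x y : ℝ, R x y = (l₁ + l₂) + k * S x y + l * T x y := by
  set s := Real.sqrt ((α₁ - α₂) ^ 2 + 4 * β₁ * β₂) with hs
  have hsq : s ^ 2 = (α₁ - α₂) ^ 2 + 4 * β₁ * β₂ := by
    rw [hs]; exact Real.sq_sqrt (by positivity)
  have hsnn : 0 ≤ s := Real.sqrt_nonneg _
  have hsgt : α₁ - α₂ < s := by nlinarith
  have hrpos : 0 < r := by rw [hr]; apply div_pos; linarith; positivity
  have hroot : β₂ * r ^ 2 + (α₁ - α₂) * r - β₁ = 0 := by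
    rw [hr]; field_simp; nlinarith [hsq]
  have hρ : (0:ℝ) < α₁ * α₂ - β₁ * β₂ := by linarith
  refine ⟨?_, ?_, ?_⟩
  · rw [hk]; apply div_pos; nlinarith; exact hρ
  · rw [hl]; apply div_neg_of_neg_of_pos
    · nlinarith [mul_pos (show (0:ℝ) < α₁ * α₂ + 2 * α₂ * β₂ + β₁ * β₂ by nlinarith) hrpos]
    · exact hρ
  · intro x y
    rw [hR, hS, hT, hk, hl]
    field_simp [hρ.ne', (show α₁ * α₂ - β₂ * β₁ ≠ 0 by nlinarith)]
    ring_nf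
    linear_combination (y * (α₁ * α₂ + 2 * α₂ * β₂ + β₁ * β₂)) * hroot
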